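/- Assume the closures of F(w) and F(w') are disjoint for all distinct words w, w' of equal length, and assume the separation condition: there exist ε₀ > 0 and n ∈ ℕ such that for every word w of length n there is a word w' of length n with d(a, b) ≥ ε₀ for all a ∈ closure(F(w)) and b ∈ closure(F(w')). Then the similarity map φ has sensitive dependence on initial conditions with sensitivity constant ε₀: for every x ∈ 𝓕 and every δ > 0 there exist y ∈ 𝓕 with d(x, y) < δ and k ∈ ℕ with d(φᵏ(x), φᵏ(y)) ≥ ε₀. -/
import Mathlib


open Filter Set Metric Topology

/-- The length-`n` prefix word `(i 0, i 1, ..., i (n-1))` of an infinite sequence `i`. -/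
def wordPrefix {m : ℕ} (i : ℕ → Fin m) (n : ℕ) : List (Fin m) :=
  (List.range n).map i

/-- Under the separation condition with constant `ε₀`, the similarity map `φ` has sensitive
dependence on initial conditions with sensitivity constant `ε₀`. -/
theorem abstract_fractal_similarity_map_sensitive
    {X : Type*} [MetricSpace X] [CompactSpace X] {m : ℕ} (hm : 2 ≤ m)
    (F : List (Fin m) → Set X)
    (hne : ∀ w : List (Fin m), (F w).Nonempty)
    (hnest : ∀ (w : List (Fin m)) (j : Fin m), F (w ++ [j]) ⊆ F w)
    (hdiam : Tendsto
      (fun n => ⨆ w : {w : List (Fin m) // w.length = n}, Metric.diam (F w.1))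
      atTop (𝓝 0))
    (π : (ℕ → Fin m) → X)
    (hπ : ∀ i : ℕ → Fin m, (⋂ n : ℕ, closure (F (wordPrefix i n))) = {π i})
    (hdisj : ∀ w w' : List (Fin m), w.length = w'.length → w ≠ w' →
      Disjoint (closure (F w)) (closure (F w')))
    (φ : Set.range π → Set.range π)
    (hφ : ∀ i : ℕ → Fin m,
      (φ ⟨π i, Set.mem_range_self i⟩ : X) = π (fun n => i (n + 1)))
    (ε₀ : ℝ) (hε₀ : 0 < ε₀) (n : ℕ)
    (hsep : ∀ w : List (Fin m), w.length = n → ∃ w' : List (Fin m), w'.length = n ∧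
      ∀ a ∈ closure (F w), ∀ b ∈ closure (F w'), ε₀ ≤ dist a b) :
    ∀ x : Set.range π, ∀ δ : ℝ, 0 < δ →
      ∃ y : Set.range π, dist (x : X) (y : X) < δ ∧
        ∃ k : ℕ, ε₀ ≤ dist (φ^[k] x : X) (φ^[k] y : X) := by
  -- basic facts
  have hbX : Bornology.IsBounded (Set.univ : Set X) := isCompact_univ.isBounded
  have hb : ∀ s : Set X, Bornology.IsBounded s := fun s => hbX.subset (subset_univ _)
  have hmem : ∀ (i : ℕ → Fin m) (N : ℕ), π i ∈ closure (F (wordPrefix i N)) := by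
    intro i N
    have h1 : π i ∈ ⋂ n : ℕ, closure (F (wordPrefix i n)) := by
      rw [hπ i]; exact rfl
    exact Set.mem_iInter.mp h1 N
  have hlen : ∀ (i : ℕ → Fin m) (N : ℕ), (wordPrefix i N).length = N := by
    intro i N; simp [wordPrefix]
  -- iterate formula
  have hiter : ∀ (k : ℕ) (i : ℕ → Fin m),
      φ^[k] ⟨π i, Set.mem_range_self i⟩ = ⟨π (fun t => i (t + k)), Set.mem_range_self _⟩ := by
    intro k
    induction k with
    | zero => intro i; simp
    | succ k ih =>
      intro i
      have hstep : φ ⟨π i, Set.mem_range_self i⟩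
          = ⟨π (fun t => i (t + 1)), Set.mem_range_self _⟩ := Subtype.ext (hφ i)
      have : φ^[k + 1] ⟨π i, Set.mem_range_self i⟩
          = φ^[k] (φ ⟨π i, Set.mem_range_self i⟩) := Function.iterate_succ_apply φ k _
      rw [this, hstep, ih]
      exact Subtype.ext (congrArg π (funext fun t => congrArg i (by omega)))
  intro x δ hδ
  obtain ⟨i, hi⟩ := x.2
  have hx : x = ⟨π i, Set.mem_range_self i⟩ := Subtype.ext hi.symm
  -- pick N with small diameters
  have hev := (hdiam.eventually (gt_mem_nhds hδ))
  obtain ⟨N, hN⟩ := Filter.eventually_atTop.mp hev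
  have hsupN := hN N le_rfl
  -- separation word
  set w : List (Fin m) := wordPrefix (fun t => i (t + N)) n with hw
  obtain ⟨w', hw'len, hsepd⟩ := hsep w (hlen _ n)
  have hz : (0 : ℕ) < m := by omega
  set z : Fin m := ⟨0, hz⟩ with hzdef
  set j : ℕ → Fin m := fun t => if t < N then i t else w'.getD (t - N) z with hj
  refine ⟨⟨π j, Set.mem_range_self j⟩, ?_, N, ?_⟩
  · -- distance bound
    have hjN : wordPrefix j N = wordPrefix i N := by
      apply List.ext_getElem (by simp [wordPrefix])
      intro t h1 h2
      simp only [wordPrefix, List.getElem_map, List.getElem_range]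
      have ht : t < N := by simpa [wordPrefix] using h1
      simp [hj, ht]
    have hπj : π j ∈ closure (F (wordPrefix i N)) := by
      rw [← hjN]; exact hmem j N
    have hπi : π i ∈ closure (F (wordPrefix i N)) := hmem i N
    have hdle : dist (π i) (π j) ≤ Metric.diam (F (wordPrefix i N)) := by
      calc dist (π i) (π j) ≤ Metric.diam (closure (F (wordPrefix i N))) :=
            Metric.dist_le_diam_of_mem ((hb _).closure) hπi hπj
        _ = Metric.diam (F (wordPrefix i N)) := Metric.diam_closure _
    have hbdd : BddAbove (Set.range fun w : {w : List (Fin m) // w.length = N} =>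
        Metric.diam (F w.1)) := by
      refine ⟨Metric.diam (Set.univ : Set X), ?_⟩
      rintro r ⟨w, rfl⟩
      exact Metric.diam_mono (subset_univ _) hbX
    have hle : Metric.diam (F (wordPrefix i N)) ≤
        ⨆ w : {w : List (Fin m) // w.length = N}, Metric.diam (F w.1) :=
      le_ciSup hbdd ⟨wordPrefix i N, hlen i N⟩
    rw [hx]
    calc dist (π i) (π j) ≤ _ := hdle
      _ ≤ _ := hle
      _ < δ := hsupN
  · -- sensitivity after N iterations
    rw [hx, hiter N i, hiter N j]
    have h1 : π (fun t => i (t + N)) ∈ closure (F w) := hw ▸ hmem _ n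
    have hshift : wordPrefix (fun t => j (t + N)) n = w' := by
      apply List.ext_getElem (by simp [wordPrefix, hw'len])
      intro t h1 h2
      have ht : t < n := by simpa [wordPrefix] using h1
      have htw' : t < w'.length := by omega
      simp only [wordPrefix, List.getElem_map, List.getElem_range]
      have hnlt : ¬ (t + N < N) := by omega
      simp [hj, hnlt, List.getD, List.getElem?_eq_getElem htw']
    have h2 : π (fun t => j (t + N)) ∈ closure (F w') := by
      rw [← hshift]; exact hmem _ n
    exact hsepd _ h1 _ h2
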